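/- arXiv:1305.4262 — 4 statements merged into one kernel-verified Lean document; each statement's English description precedes it below -/
import Mathlib

section
/- Let V and E be finite-dimensional real inner product spaces and let A : ℝⁿ → 𝓛(V; E) be the symbol of a homogeneous linear differential operator of order k, i.e. A(ξ) = ∑_{|α| = k} ξ^α A_α for some linear maps A_α ∈ 𝓛(V; E). Then there exist m ∈ ℕ and a map B : ℝⁿ → 𝓛(V; V) whose matrix entries are homogeneous polynomials of degree m in ξ, such that A(ξ) ∘ B(ξ) = 0 for every ξ ∈ ℝⁿ and max_{ξ ∈ ℝⁿ} dim B(ξ)[V] = min_{ξ ∈ ℝⁿ} dim ker A(ξ). -/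
open MeasureTheory ENNReal
open scoped NNReal RealInnerProductSpace

noncomputable section

/-- A homogeneous linear differential operator `A(D)` of order `k` from `V` to `E` on a
Euclidean space `X`, represented through its action `u ↦ A (D^k u)` on the `k`-th
iterated (Fréchet) derivative; this is equivalent to the data of a family of coefficients
`(A_α)_{|α| = k}`, `A_α ∈ 𝓛(V; E)`, acting by `A(D)u = ∑_{|α|=k} A_α (∂^α u)`. -/
abbrev DiffOperator (X : Type*) [NormedAddCommGroup X] [InnerProductSpace ℝ X]
    (k : ℕ) (V E : Type*) [NormedAddCommGroup V] [NormedSpace ℝ V]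
    [NormedAddCommGroup E] [NormedSpace ℝ E] :=
  ContinuousMultilinearMap ℝ (fun _ : Fin k => X) V →L[ℝ] E

namespace DiffOperator

variable {X : Type*} [NormedAddCommGroup X] [InnerProductSpace ℝ X]
  {k : ℕ} {V E : Type*} [NormedAddCommGroup V] [NormedSpace ℝ V]
  [NormedAddCommGroup E] [NormedSpace ℝ E]

/-- The action `A(D)u` of the differential operator on a function `u : X → V`. -/
noncomputable def app (A : DiffOperator X k V E) (u : X → V) (x : X) : E :=
  A (iteratedFDeriv ℝ k u x)

/-- The symbol `A(ξ) = ∑_{|α|=k} ξ^α A_α ∈ 𝓛(V; E)` of the operator: it sends `v : V` to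
`A` applied to the `k`-linear map `(w₁, …, w_k) ↦ (⟪ξ,w₁⟫ ⋯ ⟪ξ,w_k⟫) • v`. -/
noncomputable def symbol (A : DiffOperator X k V E) (ξ : X) : V →L[ℝ] E :=
  A.comp (((ContinuousMultilinearMap.compContinuousLinearMapL
      (fun _ : Fin k => innerSL ℝ ξ)).comp
    (ContinuousMultilinearMap.piFieldEquiv ℝ (Fin k)
      V).toContinuousLinearEquiv.toContinuousLinearMap))

/-- `A(D)` is elliptic if its symbol `A(ξ)` is injective for every `ξ ≠ 0`. -/
def IsElliptic (A : DiffOperator X k V E) : Prop :=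
  ∀ ξ : X, ξ ≠ 0 → Function.Injective (A.symbol ξ)

/-- `A(D)` is canceling if `⋂_{ξ ≠ 0} A(ξ)[V] = {0}`. -/
def IsCanceling (A : DiffOperator X k V E) : Prop :=
  (⋂ (ξ : X) (_ : ξ ≠ 0), Set.range (A.symbol ξ)) = {0}

end DiffOperator

/-- `u ∈ C_c^∞`: a smooth compactly supported function. -/
def IsTestFun {X V : Type*} [NormedAddCommGroup X] [NormedSpace ℝ X]
    [NormedAddCommGroup V] [NormedSpace ℝ V] (u : X → V) : Prop :=
  ContDiff ℝ (⊤ : ℕ∞) u ∧ HasCompactSupport u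

section AuxStatement11
open Polynomial Module

lemma aux_degree_eq_sum_univ {σ : Type*} [Fintype σ] (d : σ →₀ ℕ) :
    d.degree = ∑ i, d i := by
  rw [Finsupp.degree]
  exact Finset.sum_subset (Finset.subset_univ _)
    (fun i _ hi => Finsupp.notMem_support_iff.mp hi)

lemma aux_charpoly_diagonal {m : Type*} [Fintype m] [DecidableEq m] {R : Type*} [CommRing R]
    (μ : m → R) : (Matrix.diagonal μ).charpoly = ∏ i, (X - C (μ i)) := by
  have h : (Matrix.diagonal μ).charmatrix = Matrix.diagonal (fun i => X - C (μ i)) := by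
    ext i j
    by_cases hij : i = j
    · subst hij
      rw [Matrix.charmatrix_apply_eq, Matrix.diagonal_apply_eq, Matrix.diagonal_apply_eq]
    · rw [Matrix.charmatrix_apply_ne _ _ _ hij, Matrix.diagonal_apply_ne _ hij,
        Matrix.diagonal_apply_ne _ hij, _root_.map_zero, neg_zero]
  rw [Matrix.charpoly, h, Matrix.det_diagonal]

lemma aux_map_pow {m' : Type*} [Fintype m'] [DecidableEq m'] {R S : Type*} [CommRing R]
    [CommRing S] (f : R →+* S) (M : Matrix m' m' R) (j : ℕ) :
    (M ^ j).map f = (M.map f) ^ j := by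
  induction j with
  | zero => rw [pow_zero, pow_zero, Matrix.map_one f f.map_zero f.map_one]
  | succ j ih => rw [pow_succ, pow_succ, Matrix.map_mul, ih]

lemma aux_toLin_pow {R M : Type*} [CommRing R] [AddCommGroup M] [Module R M]
    {ι : Type*} [Fintype ι] [DecidableEq ι] (bb : Basis ι R M) (P : Matrix ι ι R) (j : ℕ) :
    Matrix.toLin bb bb (P ^ j) = (Matrix.toLin bb bb P) ^ j := by
  induction j with
  | zero => rw [pow_zero, pow_zero, Matrix.toLin_one]; rfl
  | succ j ih =>
    rw [pow_succ, pow_succ, Matrix.toLin_mul bb bb bb, ih, Module.End.mul_eq_comp]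

lemma aux_spectral {V : Type*} [NormedAddCommGroup V] [InnerProductSpace ℝ V]
    [FiniteDimensional ℝ V] {d : ℕ} (hd : Module.finrank ℝ V = d)
    (T : V →ₗ[ℝ] V) (hT : T.IsSymmetric) (r : ℕ) (hr : r ≤ finrank ℝ (LinearMap.ker T))
    (B : V →ₗ[ℝ] V)
    (hB : B = ∑ j ∈ Finset.range (d - r + 1), T.charpoly.coeff (j + r) • T ^ j) :
    (∀ x, B x ∈ LinearMap.ker T) ∧
      finrank ℝ (LinearMap.range B) =
        (if finrank ℝ (LinearMap.ker T) = r then r else 0) := by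
  classical
  set s := d - r with hs
  have hrd : r ≤ d := le_trans hr (hd ▸ Submodule.finrank_le _)
  set v := hT.eigenvectorBasis hd with hv
  set μ := hT.eigenvalues hd with hμ
  have hTv : ∀ i, T (v i) = (μ i : ℝ) • v i := fun i => hT.apply_eigenvectorBasis hd i
  have hpow : ∀ (j : ℕ) (i), (T ^ j) (v i) = (μ i : ℝ) ^ j • v i := by
    intro j
    induction j with
    | zero => intro i; simp
    | succ j ih =>
      intro i
      rw [pow_succ, Module.End.mul_apply, hTv i, _root_.map_smul, ih i, smul_smul, pow_succ]
      ring_nf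
  -- charpoly
  have hchar : T.charpoly = ∏ i, (X - C (μ i : ℝ)) := by
    have h1 : LinearMap.toMatrix v.toBasis v.toBasis T
        = Matrix.diagonal (fun i => (μ i : ℝ)) := by
      ext i j
      rw [LinearMap.toMatrix_apply, OrthonormalBasis.coe_toBasis_repr_apply,
        OrthonormalBasis.repr_apply_apply,
        show v.toBasis j = v j from congrFun (OrthonormalBasis.coe_toBasis v) j,
        hTv j, real_inner_smul_right, orthonormal_iff_ite.mp v.orthonormal i j]
      by_cases hij : i = j
      · subst hij; simp
      · simp [hij, Matrix.diagonal_apply_ne _ hij]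
    rw [← LinearMap.charpoly_toMatrix T v.toBasis, h1, aux_charpoly_diagonal]
  have hdeg : T.charpoly.natDegree = d := by
    rw [hchar, Polynomial.natDegree_prod _ _ (fun i _ => X_sub_C_ne_zero _)]
    simp
  -- kernel description
  set Z : Finset (Fin d) := Finset.univ.filter (fun i => (μ i : ℝ) = 0) with hZ
  have hvZ : ∀ i ∈ Z, v i ∈ LinearMap.ker T := by
    intro i hi
    rw [LinearMap.mem_ker, hTv i, (Finset.mem_filter.mp hi).2, zero_smul]
  have hker : LinearMap.ker T = Submodule.span ℝ (v '' Z) := by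
    apply le_antisymm
    · intro x hx
      have hx0 : T x = 0 := hx
      have hrepr : ∀ i, (μ i : ℝ) * v.repr x i = 0 := by
        intro i
        have h1 : (inner ℝ (v i) (T x) : ℝ) = (μ i : ℝ) * inner ℝ (v i) x := by
          rw [← hT (v i) x, hTv i, real_inner_smul_left]
        rw [hx0, inner_zero_right] at h1
        rw [OrthonormalBasis.repr_apply_apply, ← h1]
      rw [← v.sum_repr x]
      apply Submodule.sum_mem
      intro i _
      by_cases hi : (μ i : ℝ) = 0
      · exact Submodule.smul_mem _ _ (Submodule.subset_span
          ⟨i, Finset.mem_coe.mpr (Finset.mem_filter.mpr ⟨Finset.mem_univ i, hi⟩), rfl⟩)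
      · have h2 : v.repr x i = 0 := (mul_eq_zero.mp (hrepr i)).resolve_left hi
        rw [h2, zero_smul]
        exact Submodule.zero_mem _
    · rw [Submodule.span_le]
      rintro _ ⟨i, hi, rfl⟩
      exact hvZ i (Finset.mem_coe.mp hi)
  have hindep : LinearIndependent ℝ (fun i : {x // x ∈ Z} => v i) :=
    v.orthonormal.linearIndependent.comp _ Subtype.coe_injective
  have hzk : finrank ℝ (LinearMap.ker T) = Z.card := by
    have hr1 : Set.range (fun i : {x // x ∈ Z} => v (i : Fin d)) = v '' Z := by
      ext y
      constructor
      · rintro ⟨⟨i, hi⟩, rfl⟩; exact ⟨i, hi, rfl⟩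
      · rintro ⟨i, hi, rfl⟩; exact ⟨⟨i, Finset.mem_coe.mp hi⟩, rfl⟩
    rw [hker, ← hr1, finrank_span_eq_card hindep, Fintype.card_coe]
  have hrz : r ≤ Z.card := hzk ▸ hr
  -- charpoly = g * X^z
  have hXz : T.charpoly = (∏ i ∈ Zᶜ, (X - C (μ i : ℝ))) * X ^ Z.card := by
    rw [hchar, ← Finset.prod_mul_prod_compl Z, mul_comm]
    congr 1
    rw [show ∏ i ∈ Z, (X - C (μ i : ℝ)) = ∏ _i ∈ Z, (X : ℝ[X]) from
      Finset.prod_congr rfl (fun i hi => by rw [(Finset.mem_filter.mp hi).2, _root_.map_zero, sub_zero])]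
    rw [Finset.prod_const]
  have hcoeff_lt : ∀ j < Z.card, T.charpoly.coeff j = 0 := by
    intro j hj
    rw [hXz, Polynomial.coeff_mul_X_pow', if_neg (Nat.not_le.mpr hj)]
  -- the scalar function q
  have hqeval : ∀ x : ℝ,
      (∑ j ∈ Finset.range (s + 1), T.charpoly.coeff (j + r) * x ^ j) * x ^ r
        = T.charpoly.eval x := by
    intro x
    rw [Polynomial.eval_eq_sum_range, hdeg]
    have h1 : ∑ i ∈ Finset.range (d + 1), T.charpoly.coeff i * x ^ i
        = ∑ i ∈ Finset.Ico r (d + 1), T.charpoly.coeff i * x ^ i := by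
      rw [Finset.range_eq_Ico,
        ← Finset.sum_Ico_consecutive _ (Nat.zero_le r) (by omega : r ≤ d + 1)]
      have h0 : ∑ i ∈ Finset.Ico 0 r, T.charpoly.coeff i * x ^ i = 0 :=
        Finset.sum_eq_zero fun i hi => by
          rw [hcoeff_lt i (lt_of_lt_of_le (Finset.mem_Ico.mp hi).2 hrz), zero_mul]
      rw [h0, zero_add]
    rw [h1, Finset.sum_Ico_eq_sum_range, show d + 1 - r = s + 1 by omega, Finset.sum_mul]
    apply Finset.sum_congr rfl
    intro j _
    rw [add_comm r j, pow_add]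
    ring
  have hq_ne : ∀ i, (μ i : ℝ) ≠ 0 →
      (∑ j ∈ Finset.range (s + 1), T.charpoly.coeff (j + r) * (μ i : ℝ) ^ j) = 0 := by
    intro i hi
    have hev : T.charpoly.eval (μ i : ℝ) = 0 := by
      rw [hchar, Polynomial.eval_prod]
      exact Finset.prod_eq_zero (Finset.mem_univ i) (by simp)
    have h2 := hqeval (μ i : ℝ)
    rw [hev] at h2
    exact (mul_eq_zero.mp h2).resolve_right (pow_ne_zero _ hi)
  have hq_zero : (∑ j ∈ Finset.range (s + 1), T.charpoly.coeff (j + r) * (0 : ℝ) ^ j)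
      = T.charpoly.coeff r := by
    rw [Finset.sum_eq_single_of_mem 0 (Finset.mem_range.mpr (Nat.succ_pos s))
      (fun j _ hj => by rw [zero_pow hj, mul_zero])]
    simp
  -- B on basis
  have hBv : ∀ i, B (v i)
      = (∑ j ∈ Finset.range (s + 1), T.charpoly.coeff (j + r) * (μ i : ℝ) ^ j) • v i := by
    intro i
    rw [hB]
    simp only [LinearMap.sum_apply, LinearMap.smul_apply, hpow, smul_smul]
    rw [Finset.sum_smul]
  have hBker : ∀ x, B x ∈ LinearMap.ker T := by
    intro x
    rw [← v.sum_repr x, _root_.map_sum]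
    apply Submodule.sum_mem
    intro i _
    rw [_root_.map_smul]
    apply Submodule.smul_mem
    rw [hBv i]
    by_cases hi : (μ i : ℝ) = 0
    · exact Submodule.smul_mem _ _
        (hvZ i (Finset.mem_filter.mpr ⟨Finset.mem_univ i, hi⟩))
    · rw [hq_ne i hi, zero_smul]
      exact Submodule.zero_mem _
  refine ⟨hBker, ?_⟩
  by_cases hzr : finrank ℝ (LinearMap.ker T) = r
  · have hZr : Z.card = r := by rw [← hzk]; exact hzr
    rw [if_pos hzr]
    have hcr : T.charpoly.coeff r ≠ 0 := by
      rw [hXz, hZr, Polynomial.coeff_mul_X_pow', if_pos (le_refl r), Nat.sub_self,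
        Polynomial.coeff_zero_eq_eval_zero, Polynomial.eval_prod]
      apply Finset.prod_ne_zero_iff.mpr
      intro i hi
      have hμi : (μ i : ℝ) ≠ 0 := by
        intro h0
        exact (Finset.mem_compl.mp hi) (Finset.mem_filter.mpr ⟨Finset.mem_univ i, h0⟩)
      simpa using hμi
    have hre : LinearMap.range B = LinearMap.ker T := by
      apply le_antisymm
      · rintro _ ⟨x, rfl⟩
        exact hBker x
      · rw [hker, Submodule.span_le]
        rintro _ ⟨i, hi, rfl⟩
        have hμi : (μ i : ℝ) = 0 := (Finset.mem_filter.mp (Finset.mem_coe.mp hi)).2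
        refine ⟨(T.charpoly.coeff r)⁻¹ • v i, ?_⟩
        rw [_root_.map_smul, hBv i, hμi, hq_zero, smul_smul, inv_mul_cancel₀ hcr, one_smul]
    rw [hre, hzr]
  · rw [if_neg hzr]
    have hzgt : r < Z.card := by
      rw [← hzk]
      exact lt_of_le_of_ne hr (fun h => hzr h.symm)
    have hcr0 : T.charpoly.coeff r = 0 := hcoeff_lt r hzgt
    have hB0 : B = 0 := by
      apply Basis.ext v.toBasis
      intro i
      rw [show v.toBasis i = v i from congrFun (OrthonormalBasis.coe_toBasis v) i]
      rw [hBv i, LinearMap.zero_apply]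
      by_cases hi : (μ i : ℝ) = 0
      · rw [hi, hq_zero, hcr0, zero_smul]
      · rw [hq_ne i hi, zero_smul]
    rw [hB0, LinearMap.range_zero, finrank_bot]

end AuxStatement11

open MvPolynomial Polynomial Module in
/-- Lemma: algebraic existence of a compatible operator `B`.
Given the symbol `A(ξ) = ∑_{|α|=k} ξ^α A_α` of a homogeneous operator of order `k`,
there are `m ∈ ℕ` and a map `B : ℝⁿ → 𝓛(V; V)` whose entries are homogeneous polynomials
of degree `m` (i.e. `B(ξ) = ∑_{|α|=m} ξ^α B_α`) with `A(ξ) ∘ B(ξ) = 0` for all `ξ` and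
`max_ξ dim B(ξ)[V] = min_ξ dim ker A(ξ)`. -/
theorem statement11
    {V E : Type*} [NormedAddCommGroup V] [InnerProductSpace ℝ V] [FiniteDimensional ℝ V]
    [NormedAddCommGroup E] [InnerProductSpace ℝ E] [FiniteDimensional ℝ E]
    {n k : ℕ} (hn : 0 < n) (hk : 0 < k)
    (A : EuclideanSpace ℝ (Fin n) → (V →L[ℝ] E))
    (Ac : (Fin n → ℕ) → (V →L[ℝ] E))
    (hA : ∀ ξ, A ξ = ∑ α ∈ Finset.Nat.antidiagonalTuple n k, (∏ i, ξ i ^ α i) • Ac α) :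
    ∃ (m : ℕ) (Bc : (Fin n → ℕ) → (V →L[ℝ] V))
      (B : EuclideanSpace ℝ (Fin n) → (V →L[ℝ] V)),
      (∀ ξ, B ξ = ∑ α ∈ Finset.Nat.antidiagonalTuple n m, (∏ i, ξ i ^ α i) • Bc α) ∧
      (∀ ξ, (A ξ).comp (B ξ) = 0) ∧
      ∃ r : ℕ,
        IsGreatest {d | ∃ ξ, d = Module.finrank ℝ (LinearMap.range (B ξ : V →ₗ[ℝ] V))} r ∧
        IsLeast {d | ∃ ξ, d = Module.finrank ℝ (LinearMap.ker (A ξ : V →ₗ[ℝ] E))} r := by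
  classical
  set S : Set ℕ := {d' | ∃ ξ, d' = finrank ℝ (LinearMap.ker (A ξ : V →ₗ[ℝ] E))} with hSdef
  have hSne : S.Nonempty := ⟨_, ⟨0, rfl⟩⟩
  set r := sInf S with hrdef
  have hrS : r ∈ S := Nat.sInf_mem hSne
  have hrle : ∀ ξ, r ≤ finrank ℝ (LinearMap.ker (A ξ : V →ₗ[ℝ] E)) := fun ξ => Nat.sInf_le ⟨ξ, rfl⟩
  set d := Module.finrank ℝ V with hdV
  have hrd : r ≤ d := by
    obtain ⟨ξ₀, h0⟩ := hrS
    rw [h0, hdV]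
    exact Submodule.finrank_le _
  set s := d - r with hsdef
  set b : OrthonormalBasis (Fin d) ℝ V := stdOrthonormalBasis ℝ V with hb
  -- the symmetric operators T(ξ) = A(ξ)* ∘ A(ξ)
  set Tc : EuclideanSpace ℝ (Fin n) → (V →L[ℝ] V) :=
    fun ξ => (ContinuousLinearMap.adjoint (A ξ)).comp (A ξ) with hTc
  have hTapp : ∀ ξ x, Tc ξ x = (ContinuousLinearMap.adjoint (A ξ)) (A ξ x) := by
    intro ξ x; rw [hTc]; rfl
  have hTsym : ∀ ξ, ((Tc ξ : V →L[ℝ] V) : V →ₗ[ℝ] V).IsSymmetric := by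
    intro ξ x y
    show (inner ℝ ((Tc ξ) x) y : ℝ) = inner ℝ x ((Tc ξ) y)
    rw [hTapp, hTapp, ContinuousLinearMap.adjoint_inner_left,
      ContinuousLinearMap.adjoint_inner_right]
  have hkerT : ∀ ξ, LinearMap.ker ((Tc ξ : V →L[ℝ] V) : V →ₗ[ℝ] V) = LinearMap.ker (A ξ : V →ₗ[ℝ] E) := by
    intro ξ
    ext x
    simp only [LinearMap.mem_ker, ContinuousLinearMap.coe_coe]
    constructor
    · intro h
      have hx : (ContinuousLinearMap.adjoint (A ξ)) (A ξ x) = 0 := by rw [← hTapp]; exact h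
      have h2 : (inner ℝ (A ξ x) (A ξ x) : ℝ) = 0 := by
        rw [← ContinuousLinearMap.adjoint_inner_left (A ξ), hx, inner_zero_left]
      exact inner_self_eq_zero.mp h2
    · intro h
      rw [hTapp, h, _root_.map_zero]
  -- the multivariate polynomial matrix
  set e : (Fin n → ℕ) → (Fin n →₀ ℕ) := fun α => Finsupp.equivFunOnFinite.symm α with he
  set 𝓜 : Matrix (Fin d) (Fin d) (MvPolynomial (Fin n) ℝ) := Matrix.of fun i j =>
    ∑ α ∈ Finset.Nat.antidiagonalTuple n k, ∑ β ∈ Finset.Nat.antidiagonalTuple n k,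
      MvPolynomial.monomial (e α + e β) ((inner ℝ (Ac α (b i)) (Ac β (b j)) : ℝ)) with h𝓜
  have h𝓜hom : ∀ i j, (𝓜 i j).IsHomogeneous (2 * k) := by
    intro i j
    rw [h𝓜]
    simp only [Matrix.of_apply]
    apply MvPolynomial.IsHomogeneous.sum
    intro α hα
    apply MvPolynomial.IsHomogeneous.sum
    intro β hβ
    apply MvPolynomial.isHomogeneous_monomial
    rw [aux_degree_eq_sum_univ]
    have h1 : ∀ l, (e α + e β) l = α l + β l := fun l => rfl
    simp only [h1]
    rw [Finset.sum_add_distrib, Finset.Nat.mem_antidiagonalTuple.mp hα,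
      Finset.Nat.mem_antidiagonalTuple.mp hβ]
    ring
  have h𝓜eval : ∀ (ξ : EuclideanSpace ℝ (Fin n)) i j,
      MvPolynomial.eval (fun l => ξ l) (𝓜 i j) = inner ℝ (b i) ((Tc ξ) (b j)) := by
    intro ξ i j
    have hR : (inner ℝ (b i) ((Tc ξ) (b j)) : ℝ) = inner ℝ (A ξ (b i)) (A ξ (b j)) := by
      rw [hTapp, ContinuousLinearMap.adjoint_inner_right]
    rw [hR, hA ξ, h𝓜]
    simp only [Matrix.of_apply, _root_.map_sum, MvPolynomial.eval_monomial,
      ContinuousLinearMap.sum_apply, ContinuousLinearMap.smul_apply]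
    rw [sum_inner]
    apply Finset.sum_congr rfl
    intro α hα
    rw [inner_sum]
    apply Finset.sum_congr rfl
    intro β hβ
    rw [real_inner_smul_left, real_inner_smul_right, Finsupp.prod_pow]
    have h1 : ∀ l, (e α + e β) l = α l + β l := fun l => rfl
    simp only [h1, pow_add, Finset.prod_mul_distrib]
    ring
  have hSmat : ∀ ξ : EuclideanSpace ℝ (Fin n), 𝓜.map (MvPolynomial.eval fun l => ξ l)
      = LinearMap.toMatrix b.toBasis b.toBasis ((Tc ξ : V →L[ℝ] V) : V →ₗ[ℝ] V) := by
    intro ξ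
    ext i j
    rw [Matrix.map_apply, h𝓜eval ξ i j, LinearMap.toMatrix_apply,
      OrthonormalBasis.coe_toBasis_repr_apply, OrthonormalBasis.repr_apply_apply,
      show b.toBasis j = b j from congrFun (OrthonormalBasis.coe_toBasis b) j,
      ContinuousLinearMap.coe_coe]
  -- homogeneity of charpoly coefficients
  have hchom : ∀ j, j ≤ d → (𝓜.charpoly.coeff j).IsHomogeneous (2 * k * (d - j)) := by
    intro j hj
    have h1 := Matrix.charpoly.univ_coeff_eval₂Hom (Fin d)
      (MvPolynomial.C : ℝ →+* MvPolynomial (Fin n) ℝ) (fun p => 𝓜 p.1 p.2) j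
    have h2 : (Matrix.of (Function.curry fun p : Fin d × Fin d => 𝓜 p.1 p.2)) = 𝓜 := by
      ext i l; rfl
    rw [h2] at h1
    rw [← h1]
    have h3 : ((Matrix.charpoly.univ ℝ (Fin d)).coeff j).IsHomogeneous (d - j) :=
      Matrix.charpoly.univ_coeff_isHomogeneous ℝ (Fin d) j (d - j)
        (by rw [Fintype.card_fin]; omega)
    have h4 := h3.eval₂ (MvPolynomial.C : ℝ →+* MvPolynomial (Fin n) ℝ)
      (fun p => 𝓜 p.1 p.2) (fun r' => MvPolynomial.isHomogeneous_C _ _)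
      (fun p => h𝓜hom p.1 p.2)
    simpa only [MvPolynomial.coe_eval₂Hom] using h4
  have hpowhom : ∀ (j : ℕ) (i l), ((𝓜 ^ j) i l).IsHomogeneous (2 * k * j) := by
    intro j
    induction j with
    | zero =>
      intro i l
      rw [pow_zero, mul_zero]
      by_cases hil : i = l
      · subst hil
        rw [Matrix.one_apply_eq]
        exact MvPolynomial.isHomogeneous_one _ _
      · rw [Matrix.one_apply_ne hil]
        exact MvPolynomial.isHomogeneous_zero _ _ _
    | succ j ih =>
      intro i l
      rw [pow_succ, Matrix.mul_apply]
      apply MvPolynomial.IsHomogeneous.sum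
      intro x _
      have h := (ih i x).mul (h𝓜hom x l)
      have he2 : 2 * k * j + 2 * k = 2 * k * (j + 1) := by ring
      rwa [he2] at h
  set 𝓑 : Matrix (Fin d) (Fin d) (MvPolynomial (Fin n) ℝ) :=
    ∑ j ∈ Finset.range (s + 1), 𝓜.charpoly.coeff (j + r) • 𝓜 ^ j with h𝓑
  have h𝓑hom : ∀ i l, (𝓑 i l).IsHomogeneous (2 * k * s) := by
    intro i l
    rw [h𝓑]
    simp only [Matrix.sum_apply, Matrix.smul_apply, smul_eq_mul]
    apply MvPolynomial.IsHomogeneous.sum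
    intro j hj
    have hj' : j ≤ s := Nat.lt_succ_iff.mp (Finset.mem_range.mp hj)
    have h := (hchom (j + r) (by omega)).mul (hpowhom j i l)
    have he2 : 2 * k * (d - (j + r)) + 2 * k * j = 2 * k * s := by
      rw [← Nat.mul_add]
      congr 1
      omega
    rwa [he2] at h
  -- the B operators
  set Bmat : EuclideanSpace ℝ (Fin n) → Matrix (Fin d) (Fin d) ℝ :=
    fun ξ => 𝓑.map (MvPolynomial.eval fun l => ξ l) with hBmatdef
  set Blin : EuclideanSpace ℝ (Fin n) → (V →ₗ[ℝ] V) :=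
    fun ξ => Matrix.toLin b.toBasis b.toBasis (Bmat ξ) with hBlindef
  set B : EuclideanSpace ℝ (Fin n) → (V →L[ℝ] V) :=
    fun ξ => LinearMap.toContinuousLinearMap (Blin ξ) with hBdef
  set Bc : (Fin n → ℕ) → (V →L[ℝ] V) := fun α =>
    LinearMap.toContinuousLinearMap (Matrix.toLin b.toBasis b.toBasis
      (Matrix.of fun i l => MvPolynomial.coeff (e α) (𝓑 i l))) with hBcdef
  -- B ξ expanded in monomials
  have hBsum : ∀ ξ : EuclideanSpace ℝ (Fin n),
      B ξ = ∑ α ∈ Finset.Nat.antidiagonalTuple n (2 * k * s),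
        (∏ i, ξ i ^ α i) • Bc α := by
    intro ξ
    have hinj : ∀ a ∈ Finset.Nat.antidiagonalTuple n (2 * k * s),
        ∀ a' ∈ Finset.Nat.antidiagonalTuple n (2 * k * s), e a = e a' → a = a' := by
      intro a _ a' _ h
      exact Finsupp.equivFunOnFinite.symm.injective h
    have hmat : Bmat ξ = ∑ α ∈ Finset.Nat.antidiagonalTuple n (2 * k * s),
        (∏ i, ξ i ^ α i) • Matrix.of (fun i l => MvPolynomial.coeff (e α) (𝓑 i l)) := by
      ext i l
      simp only [hBmatdef, Matrix.map_apply, Matrix.sum_apply, Matrix.smul_apply,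
        Matrix.of_apply, smul_eq_mul]
      have hsub : (𝓑 i l).support ⊆ (Finset.Nat.antidiagonalTuple n (2 * k * s)).image e := by
        intro δ hδ
        have hdeg : δ.degree = 2 * k * s := by
          by_contra hne
          exact (MvPolynomial.mem_support_iff.mp hδ) ((h𝓑hom i l).coeff_eq_zero hne)
        refine Finset.mem_image.mpr ⟨Finsupp.equivFunOnFinite δ, ?_, ?_⟩
        · rw [Finset.Nat.mem_antidiagonalTuple]
          rw [← hdeg, aux_degree_eq_sum_univ]
          rfl
        · exact Finsupp.equivFunOnFinite.symm_apply_apply δ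
      calc MvPolynomial.eval (fun l' => ξ l') (𝓑 i l)
          = ∑ δ ∈ (𝓑 i l).support,
              MvPolynomial.coeff δ (𝓑 i l) * ∏ i', (ξ i') ^ δ i' :=
            MvPolynomial.eval_eq' _ _
        _ = ∑ δ ∈ (Finset.Nat.antidiagonalTuple n (2 * k * s)).image e,
              MvPolynomial.coeff δ (𝓑 i l) * ∏ i', (ξ i') ^ δ i' :=
            Finset.sum_subset hsub (fun δ _ hδ => by
              simp [MvPolynomial.notMem_support_iff.mp hδ])
        _ = ∑ α ∈ Finset.Nat.antidiagonalTuple n (2 * k * s),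
              (∏ i', ξ i' ^ α i') * MvPolynomial.coeff (e α) (𝓑 i l) := by
            rw [Finset.sum_image hinj]
            exact Finset.sum_congr rfl fun α _ => mul_comm _ _
    have hlin : Blin ξ = ∑ α ∈ Finset.Nat.antidiagonalTuple n (2 * k * s),
        (∏ i, ξ i ^ α i) • Matrix.toLin b.toBasis b.toBasis
          (Matrix.of fun i l => MvPolynomial.coeff (e α) (𝓑 i l)) := by
      rw [hBlindef]
      show Matrix.toLin b.toBasis b.toBasis (Bmat ξ) = _
      rw [hmat, _root_.map_sum]
      exact Finset.sum_congr rfl fun α _ => by rw [_root_.map_smul]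
    show LinearMap.toContinuousLinearMap (Blin ξ) = _
    rw [hlin, _root_.map_sum]
    exact Finset.sum_congr rfl fun α _ => by rw [_root_.map_smul]
  -- evaluated charpoly coefficients
  have hceval : ∀ (ξ : EuclideanSpace ℝ (Fin n)) (j : ℕ),
      MvPolynomial.eval (fun l => ξ l) (𝓜.charpoly.coeff j)
        = (((Tc ξ : V →L[ℝ] V) : V →ₗ[ℝ] V).charpoly).coeff j := by
    intro ξ j
    have h1 := Matrix.charpoly_map 𝓜 (MvPolynomial.eval (fun l => ξ l))
    rw [hSmat ξ, LinearMap.charpoly_toMatrix] at h1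
    rw [← Polynomial.coeff_map, h1]
  -- B in terms of T
  have hBT : ∀ ξ : EuclideanSpace ℝ (Fin n), Blin ξ = ∑ j ∈ Finset.range (s + 1),
      (((Tc ξ : V →L[ℝ] V) : V →ₗ[ℝ] V).charpoly).coeff (j + r)
        • ((Tc ξ : V →L[ℝ] V) : V →ₗ[ℝ] V) ^ j := by
    intro ξ
    have hmap : Bmat ξ = ∑ j ∈ Finset.range (s + 1),
        MvPolynomial.eval (fun l => ξ l) (𝓜.charpoly.coeff (j + r))
          • (𝓜.map (MvPolynomial.eval fun l => ξ l)) ^ j := by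
      show 𝓑.map _ = _
      rw [h𝓑]
      ext i l
      simp only [Matrix.map_apply, Matrix.sum_apply, Matrix.smul_apply, smul_eq_mul]
      rw [_root_.map_sum]
      apply Finset.sum_congr rfl
      intro j _
      rw [_root_.map_mul]
      congr 1
      rw [← aux_map_pow]
      rfl
    show Matrix.toLin b.toBasis b.toBasis (Bmat ξ) = _
    rw [hmap, _root_.map_sum]
    apply Finset.sum_congr rfl
    intro j _
    rw [_root_.map_smul, aux_toLin_pow, hSmat ξ, Matrix.toLin_toMatrix, hceval]
  -- main per-ξ facts
  have hmain : ∀ ξ, (∀ x, Blin ξ x ∈ LinearMap.ker (A ξ : V →ₗ[ℝ] E)) ∧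
      finrank ℝ (LinearMap.range (Blin ξ))
        = (if finrank ℝ (LinearMap.ker (A ξ : V →ₗ[ℝ] E)) = r then r else 0) := by
    intro ξ
    have h := aux_spectral hdV.symm ((Tc ξ : V →L[ℝ] V) : V →ₗ[ℝ] V) (hTsym ξ) r
      (by rw [hkerT ξ]; exact hrle ξ) (Blin ξ)
      (by rw [hBT ξ])
    rw [hkerT ξ] at h
    exact h
  have hBapp : ∀ ξ x, B ξ x = Blin ξ x := fun ξ x => rfl
  have hrangeBB : ∀ ξ, LinearMap.range (B ξ : V →ₗ[ℝ] V) = LinearMap.range (Blin ξ) := by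
    intro ξ
    ext y
    simp only [LinearMap.mem_range]
    constructor
    · rintro ⟨x, rfl⟩; exact ⟨x, rfl⟩
    · rintro ⟨x, rfl⟩; exact ⟨x, rfl⟩
  refine ⟨2 * k * s, Bc, B, hBsum, ?_, r, ⟨?_, ?_⟩, ?_⟩
  · -- A ∘ B = 0
    intro ξ
    ext x
    simp only [ContinuousLinearMap.comp_apply, ContinuousLinearMap.zero_apply]
    rw [hBapp]
    exact LinearMap.mem_ker.mp ((hmain ξ).1 x)
  · -- membership for IsGreatest
    obtain ⟨ξ₀, h0⟩ := hrS
    exact ⟨ξ₀, by rw [hrangeBB ξ₀, (hmain ξ₀).2, if_pos h0.symm]⟩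
  · -- upper bound
    rintro dv ⟨ξ, hdv⟩
    rw [hdv, hrangeBB ξ, (hmain ξ).2]
    split_ifs
    · exact le_refl r
    · exact Nat.zero_le r
  · exact ⟨hrS, fun x hx => Nat.sInf_le hx⟩
end
end

section
/- Let b, c ∈ ℝⁿ \ {0} and set J = { x ∈ ℝⁿ : |b · x| ≤ |c · x| }. If |b · c| < |b|², then for every nonnegative function f ∈ L¹(ℝⁿ), ∫_{J} ∫_{ℝ} f(x + t b) / |x| dt dx ≤ 2 |b| √(|b|²|c|² − (b·c)²) / (|b|⁴ − (b·c)²) · ∫_{ℝⁿ} f(x) dx. -/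
open MeasureTheory ENNReal
open scoped NNReal RealInnerProductSpace

noncomputable section


lemma le_of_sq_le_sq' {a b : ℝ} (hb : 0 ≤ b) (h : a ^ 2 ≤ b ^ 2) : a ≤ b := by
  nlinarith

set_option maxHeartbeats 1000000 in
lemma key_oneD {n : ℕ} (b c : EuclideanSpace ℝ (Fin n)) (hb : b ≠ 0)
    (hbc : |⟪b, c⟫| < ‖b‖ ^ 2) (z : EuclideanSpace ℝ (Fin n)) :
    ∫⁻ t : ℝ in {t : ℝ | |⟪b, z - t • b⟫| ≤ |⟪c, z - t • b⟫|},
        ((‖z - t • b‖₊ : ℝ≥0∞))⁻¹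
      ≤ ENNReal.ofReal
          (2 * ‖b‖ * Real.sqrt (‖b‖ ^ 2 * ‖c‖ ^ 2 - ⟪b, c⟫ ^ 2) / (‖b‖ ^ 4 - ⟪b, c⟫ ^ 2)) := by
  have hbn : 0 < ‖b‖ := norm_pos_iff.mpr hb
  set B : ℝ := ‖b‖ ^ 2 with hBdef
  set G : ℝ := ⟪b, c⟫ with hGdef
  have hB : 0 < B := by positivity
  have habs := abs_lt.mp hbc
  have hG2 : G ^ 2 < B ^ 2 := by nlinarith [sq_abs G]
  have hD : 0 < B ^ 2 - G ^ 2 := by linarith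
  set D : ℝ := B ^ 2 - G ^ 2 with hDdef
  set α : ℝ := ⟪b, z⟫ with hαdef
  set β : ℝ := ⟪c, z⟫ with hβdef
  set w : EuclideanSpace ℝ (Fin n) := z - (α / B) • b with hwdef
  have hbb : ⟪b, b⟫ = B := real_inner_self_eq_norm_sq b
  have hcb : ⟪c, b⟫ = G := by rw [real_inner_comm]
  have hbw : ⟪b, w⟫ = 0 := by
    rw [hwdef, inner_sub_right, real_inner_smul_right, hbb,
      div_mul_cancel₀ _ hB.ne', sub_self]
  have hcw : ⟪c, w⟫ = β - α * G / B := by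
    rw [hwdef, inner_sub_right, real_inner_smul_right, hcb]
    ring
  set r : ℝ := ‖w‖ with hrdef
  have hr0 : 0 ≤ r := norm_nonneg w
  -- lower bound on ‖z - t • b‖
  have hnorm : ∀ t : ℝ, r ≤ ‖z - t • b‖ := by
    intro t
    have hzt : z - t • b = w + (α / B - t) • b := by
      rw [hwdef, sub_smul]; abel
    have : ‖w + (α / B - t) • b‖ ^ 2 = r ^ 2 + (α / B - t) ^ 2 * B := by
      have hinn : (inner ℝ w ((α / B - t) • b) : ℝ) = 0 := by
        rw [real_inner_smul_right, real_inner_comm, hbw, mul_zero]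
      rw [norm_add_sq_real, hinn, norm_smul, mul_pow]
      simp only [Real.norm_eq_abs, sq_abs, hBdef]
      ring
    rw [hzt]
    apply le_of_sq_le_sq' (norm_nonneg _)
    nlinarith [sq_nonneg (α / B - t)]
  set K : ℝ := |α * G - β * B| with hKdef
  have hK0 : 0 ≤ K := abs_nonneg _
  have hK2 : K ^ 2 = (α * G - β * B) ^ 2 := sq_abs _
  set m : ℝ := (α * B - β * G) / D with hmdef
  set tlo : ℝ := (α * B - β * G - K) / D with htlodef
  set thi : ℝ := (α * B - β * G + K) / D with hthidef
  -- the cone condition confines t to [tlo, thi]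
  have hsub : {t : ℝ | |⟪b, z - t • b⟫| ≤ |⟪c, z - t • b⟫|} ⊆ Set.Icc tlo thi := by
    intro t ht
    simp only [Set.mem_setOf_eq, inner_sub_right, real_inner_smul_right, hbb, hcb] at ht
    have h1 := (abs_le.mp ht).1
    have h2 := (abs_le.mp ht).2
    have hq : (α - t * B) ^ 2 ≤ (β - t * G) ^ 2 := by
      have := sq_le_sq' h1 h2
      rwa [sq_abs] at this
    have hu : (t * D - (α * B - β * G)) ^ 2
        = D * ((α - t * B) ^ 2 - (β - t * G) ^ 2) + (α * G - β * B) ^ 2 := by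
      simp only [hDdef]; ring
    have huK : (t * D - (α * B - β * G)) ^ 2 ≤ K ^ 2 := by
      rw [hu, hK2]
      have : D * ((α - t * B) ^ 2 - (β - t * G) ^ 2) ≤ 0 :=
        mul_nonpos_of_nonneg_of_nonpos hD.le (sub_nonpos.mpr hq)
      linarith
    have h3 : t * D - (α * B - β * G) ≤ K := le_of_sq_le_sq' hK0 huK
    have h4 : -(t * D - (α * B - β * G)) ≤ K := by
      apply le_of_sq_le_sq' hK0; rw [neg_pow]; simpa using huK
    constructor
    · rw [htlodef, div_le_iff₀ hD]
      linarith
    · rw [hthidef, le_div_iff₀ hD]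
      linarith
  -- bound K by the geometry
  have hX0 : (0:ℝ) ≤ B * ‖c‖ ^ 2 - G ^ 2 := by
    have := abs_real_inner_le_norm b c
    nlinarith [sq_abs G, abs_nonneg (⟪b,c⟫ : ℝ), norm_nonneg b, norm_nonneg c]
  set X : ℝ := Real.sqrt (B * ‖c‖ ^ 2 - G ^ 2) with hXdef
  have hXnn : 0 ≤ X := Real.sqrt_nonneg _
  have hX2 : X ^ 2 = B * ‖c‖ ^ 2 - G ^ 2 := Real.sq_sqrt hX0
  have hKr : K ≤ ‖b‖ * X * r := by
    have hcperp : ‖c - (G / B) • b‖ ^ 2 = ‖c‖ ^ 2 - G ^ 2 / B := by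
      rw [norm_sub_sq_real, real_inner_smul_right, hcb, norm_smul, mul_pow]
      simp only [Real.norm_eq_abs, sq_abs]
      rw [show (‖b‖:ℝ) ^ 2 = B from rfl]
      field_simp
      ring
    have hcwperp : ⟪c - (G / B) • b, w⟫ = ⟪c, w⟫ := by
      rw [inner_sub_left, real_inner_smul_left, hbw]
      ring
    have hCS : |⟪c, w⟫| ≤ ‖c - (G / B) • b‖ * r := by
      rw [← hcwperp]
      exact abs_real_inner_le_norm _ _
    have hKeq : K = B * |⟪c, w⟫| := by
      rw [hKdef, hcw]
      rw [show α * G - β * B = -(B * (β - α * G / B)) by field_simp; ring]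
      rw [abs_neg, abs_mul, abs_of_pos hB]
    apply le_of_sq_le_sq' (by positivity)
    rw [hKeq, mul_pow, mul_pow, mul_pow, hX2]
    have h1 : |⟪c, w⟫| ^ 2 ≤ (‖c‖ ^ 2 - G ^ 2 / B) * r ^ 2 := by
      calc |⟪c, w⟫| ^ 2 ≤ (‖c - (G / B) • b‖ * r) ^ 2 := by
            apply pow_le_pow_left₀ (abs_nonneg _) hCS
        _ = (‖c‖ ^ 2 - G ^ 2 / B) * r ^ 2 := by rw [mul_pow, hcperp]
    calc B ^ 2 * |⟪c, w⟫| ^ 2 ≤ B ^ 2 * ((‖c‖ ^ 2 - G ^ 2 / B) * r ^ 2) := by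
          apply mul_le_mul_of_nonneg_left h1 (by positivity)
      _ = ‖b‖ ^ 2 * (B * ‖c‖ ^ 2 - G ^ 2) * r ^ 2 := by
          rw [show (‖b‖:ℝ) ^ 2 = B from rfl]; field_simp
  -- conclude
  have hC : (2 : ℝ) * ‖b‖ * Real.sqrt (‖b‖ ^ 2 * ‖c‖ ^ 2 - ⟪b, c⟫ ^ 2) / (‖b‖ ^ 4 - ⟪b, c⟫ ^ 2)
      = 2 * ‖b‖ * X / D := by
    rw [hXdef, hDdef, hBdef, hGdef]
    ring_nf
  rw [hC]
  calc ∫⁻ t : ℝ in {t : ℝ | |⟪b, z - t • b⟫| ≤ |⟪c, z - t • b⟫|}, ((‖z - t • b‖₊ : ℝ≥0∞))⁻¹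
      ≤ ∫⁻ t : ℝ in Set.Icc tlo thi, ((‖z - t • b‖₊ : ℝ≥0∞))⁻¹ := lintegral_mono_set hsub
    _ ≤ ENNReal.ofReal (2 * ‖b‖ * X / D) := by
        rcases eq_or_lt_of_le hr0 with hr | hr
        · -- r = 0 : degenerate interval
          have hKz : K = 0 := le_antisymm (by rw [← hr] at hKr; simpa using hKr) hK0
          have hIcc : volume (Set.Icc tlo thi) = 0 := by
            rw [Real.volume_Icc]
            have : thi - tlo ≤ 0 := by
              rw [hthidef, htlodef, hKz]
              simp
            simp [ENNReal.ofReal_eq_zero.mpr this]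
          calc ∫⁻ t : ℝ in Set.Icc tlo thi, ((‖z - t • b‖₊ : ℝ≥0∞))⁻¹
              ≤ ∫⁻ _ : ℝ in Set.Icc tlo thi, (⊤ : ℝ≥0∞) := lintegral_mono fun t => le_top
            _ = ⊤ * volume (Set.Icc tlo thi) := setLIntegral_const _ _
            _ = 0 := by rw [hIcc, mul_zero]
            _ ≤ _ := zero_le
        · -- r > 0
          have hbd : ∀ t : ℝ, ((‖z - t • b‖₊ : ℝ≥0∞))⁻¹ ≤ ENNReal.ofReal r⁻¹ := by
            intro t
            rw [ENNReal.ofReal_inv_of_pos hr]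
            apply ENNReal.inv_le_inv'
            rw [← ENNReal.ofReal_coe_nnreal, coe_nnnorm]
            exact ENNReal.ofReal_le_ofReal (hnorm t)
          calc ∫⁻ t : ℝ in Set.Icc tlo thi, ((‖z - t • b‖₊ : ℝ≥0∞))⁻¹
              ≤ ∫⁻ _ : ℝ in Set.Icc tlo thi, ENNReal.ofReal r⁻¹ :=
                lintegral_mono fun t => hbd t
            _ = ENNReal.ofReal r⁻¹ * volume (Set.Icc tlo thi) := setLIntegral_const _ _
            _ = ENNReal.ofReal r⁻¹ * ENNReal.ofReal (thi - tlo) := by rw [Real.volume_Icc]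
            _ = ENNReal.ofReal (r⁻¹ * (thi - tlo)) := by
                rw [ENNReal.ofReal_mul (by positivity)]
            _ ≤ ENNReal.ofReal (2 * ‖b‖ * X / D) := by
                apply ENNReal.ofReal_le_ofReal
                have hlen : thi - tlo = 2 * K / D := by
                  rw [hthidef, htlodef]; field_simp; ring
                rw [hlen]
                calc r⁻¹ * (2 * K / D) ≤ r⁻¹ * (2 * (‖b‖ * X * r) / D) := by
                      gcongr
                  _ = 2 * ‖b‖ * X / D := by field_simp




/-- Lemma: averaging along lines over the cone `|b·x| ≤ |c·x|`.
For `b, c ∈ ℝⁿ \ {0}` with `|b·c| < |b|²`, `J = {x : |b·x| ≤ |c·x|}` and every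
nonnegative `f ∈ L¹(ℝⁿ)`,
`∫_J ∫_ℝ f(x+tb)/|x| dt dx ≤ 2|b|√(|b|²|c|²−(b·c)²)/(|b|⁴−(b·c)²) ∫ f`. -/
theorem statement14
    {n : ℕ} (hn : 0 < n)
    (b c : EuclideanSpace ℝ (Fin n)) (hb : b ≠ 0) (hc : c ≠ 0)
    (hbc : |⟪b, c⟫| < ‖b‖ ^ 2)
    (f : EuclideanSpace ℝ (Fin n) → ℝ) (hf0 : ∀ x, 0 ≤ f x) (hf : Integrable f) :
    ∫⁻ x in {x : EuclideanSpace ℝ (Fin n) | |⟪b, x⟫| ≤ |⟪c, x⟫|},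
        (∫⁻ t : ℝ, ENNReal.ofReal (f (x + t • b))) / (‖x‖₊ : ℝ≥0∞)
      ≤ ENNReal.ofReal
          (2 * ‖b‖ * Real.sqrt (‖b‖ ^ 2 * ‖c‖ ^ 2 - ⟪b, c⟫ ^ 2) / (‖b‖ ^ 4 - ⟪b, c⟫ ^ 2))
        * ∫⁻ x, ENNReal.ofReal (f x) := by
  classical
  set C : ℝ :=
    2 * ‖b‖ * Real.sqrt (‖b‖ ^ 2 * ‖c‖ ^ 2 - ⟪b, c⟫ ^ 2) / (‖b‖ ^ 4 - ⟪b, c⟫ ^ 2) with hC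
  obtain ⟨g, hgmeas, hfg⟩ : ∃ g, Measurable g ∧ f =ᵐ[volume] g :=
    ⟨hf.1.aemeasurable.mk f, hf.1.aemeasurable.measurable_mk, hf.1.aemeasurable.ae_eq_mk⟩
  set F : EuclideanSpace ℝ (Fin n) → ℝ≥0∞ := fun x => ENNReal.ofReal (g x) with hF
  have hFmeas : Measurable F := ENNReal.measurable_ofReal.comp hgmeas
  set J : Set (EuclideanSpace ℝ (Fin n)) := {x | |⟪b, x⟫| ≤ |⟪c, x⟫|} with hJ
  have hJm : MeasurableSet J := by
    apply measurableSet_le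
    · exact ((continuous_const.inner continuous_id).abs).measurable
    · exact ((continuous_const.inner continuous_id).abs).measurable
  have hshear : Measurable fun p : EuclideanSpace ℝ (Fin n) × ℝ => p.1 + p.2 • b :=
    (continuous_fst.add (continuous_snd.smul continuous_const)).measurable
  have hshear' : Measurable fun p : ℝ × EuclideanSpace ℝ (Fin n) => p.2 - p.1 • b :=
    (continuous_snd.sub (continuous_fst.smul continuous_const)).measurable
  have hsmeas : ∀ x : EuclideanSpace ℝ (Fin n), Measurable fun t : ℝ => x + t • b :=
    fun x => (continuous_const.add (continuous_id.smul continuous_const)).measurable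
  -- Step A: replace f by its measurable representative g in the inner integrals, a.e.
  have hae : ∀ᵐ x : EuclideanSpace ℝ (Fin n) ∂volume,
      (∫⁻ t : ℝ, ENNReal.ofReal (f (x + t • b))) = ∫⁻ t : ℝ, F (x + t • b) := by
    have hnull : volume {x : EuclideanSpace ℝ (Fin n) | f x ≠ g x} = 0 := ae_iff.mp hfg
    obtain ⟨N, hNsub, hNm, hN0⟩ := exists_measurable_superset_of_null hnull
    have hind : Measurable fun p : EuclideanSpace ℝ (Fin n) × ℝ =>
        N.indicator (fun _ => (1:ℝ≥0∞)) (p.1 + p.2 • b) :=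
      (measurable_const.indicator hNm).comp hshear
    have hswap : ∫⁻ x : EuclideanSpace ℝ (Fin n),
        ∫⁻ t : ℝ, N.indicator (fun _ => (1:ℝ≥0∞)) (x + t • b) = 0 := by
      rw [lintegral_lintegral_swap hind.aemeasurable]
      have hzero : ∀ t : ℝ, ∫⁻ x : EuclideanSpace ℝ (Fin n),
          N.indicator (fun _ => (1:ℝ≥0∞)) (x + t • b) = 0 := by
        intro t
        rw [lintegral_add_right_eq_self (fun x => N.indicator (fun _ => (1:ℝ≥0∞)) x) (t • b),
          lintegral_indicator hNm]
        simp [hN0]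
      simp [hzero]
    have hm1 : Measurable fun x : EuclideanSpace ℝ (Fin n) =>
        ∫⁻ t : ℝ, N.indicator (fun _ => (1:ℝ≥0∞)) (x + t • b) :=
      Measurable.lintegral_prod_right (f := fun x t =>
        N.indicator (fun _ => (1:ℝ≥0∞)) (x + t • b)) hind
    have h0 := (lintegral_eq_zero_iff hm1).mp hswap
    filter_upwards [h0] with x hx
    have hmt : Measurable fun t : ℝ => N.indicator (fun _ => (1:ℝ≥0∞)) (x + t • b) :=
      (measurable_const.indicator hNm).comp (hsmeas x)
    have hxt := (lintegral_eq_zero_iff hmt).mp hx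
    apply lintegral_congr_ae
    filter_upwards [hxt] with t ht
    have hnot : x + t • b ∉ N := by
      by_contra hmem
      simp [Set.indicator_of_mem hmem] at ht
    have : f (x + t • b) = g (x + t • b) := by
      by_contra hne
      exact hnot (hNsub hne)
    rw [this]
  -- rewrite RHS
  have hRHS : ∫⁻ x, ENNReal.ofReal (f x) = ∫⁻ x, F x :=
    lintegral_congr_ae (hfg.mono fun x hx => by rw [hF]; simp [hx])
  -- rewrite LHS using F
  have hLHS : ∫⁻ x in J, (∫⁻ t : ℝ, ENNReal.ofReal (f (x + t • b))) / (‖x‖₊ : ℝ≥0∞)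
      = ∫⁻ x in J, (∫⁻ t : ℝ, F (x + t • b)) / (‖x‖₊ : ℝ≥0∞) :=
    lintegral_congr_ae ((ae_restrict_of_ae hae).mono fun x hx => by dsimp only; rw [hx])
  rw [hLHS, hRHS]
  -- main estimate with measurable F
  simp only [div_eq_mul_inv]
  have hstep1 : ∫⁻ x in J, (∫⁻ t : ℝ, F (x + t • b)) * ((‖x‖₊ : ℝ≥0∞))⁻¹
      = ∫⁻ x in J, ∫⁻ t : ℝ, F (x + t • b) * ((‖x‖₊ : ℝ≥0∞))⁻¹ :=
    lintegral_congr fun x => (lintegral_mul_const _ (hFmeas.comp (hsmeas x))).symm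
  rw [hstep1]
  have hprodmeas : Measurable (Function.uncurry fun (x : EuclideanSpace ℝ (Fin n)) (t : ℝ) =>
      F (x + t • b) * ((‖x‖₊ : ℝ≥0∞))⁻¹) := by
    apply Measurable.mul
    · exact (hFmeas.comp hshear)
    · exact (measurable_fst.nnnorm.coe_nnreal_ennreal).inv
  rw [lintegral_lintegral_swap hprodmeas.aemeasurable]
  -- change of variables x ↦ z - t b for each t
  have hstep2 : ∀ t : ℝ, (∫⁻ x in J, F (x + t • b) * ((‖x‖₊ : ℝ≥0∞))⁻¹)
      = ∫⁻ z, J.indicator (fun _ => (1:ℝ≥0∞)) (z - t • b)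
          * (F z * ((‖z - t • b‖₊ : ℝ≥0∞))⁻¹) := by
    intro t
    set φ : EuclideanSpace ℝ (Fin n) → ℝ≥0∞ := fun z =>
      J.indicator (fun _ => (1:ℝ≥0∞)) (z - t • b) * (F z * ((‖z - t • b‖₊ : ℝ≥0∞))⁻¹)
      with hφ
    have hpt : ∀ x : EuclideanSpace ℝ (Fin n),
        J.indicator (fun x => F (x + t • b) * ((‖x‖₊ : ℝ≥0∞))⁻¹) x = φ (x + t • b) := by
      intro x
      rw [hφ]
      simp only [add_sub_cancel_right]
      by_cases hx : x ∈ J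
      · rw [Set.indicator_of_mem hx, Set.indicator_of_mem hx, one_mul]
      · rw [Set.indicator_of_notMem hx, Set.indicator_of_notMem hx, zero_mul]
    calc ∫⁻ x in J, F (x + t • b) * ((‖x‖₊ : ℝ≥0∞))⁻¹
        = ∫⁻ x, J.indicator (fun x => F (x + t • b) * ((‖x‖₊ : ℝ≥0∞))⁻¹) x :=
          (lintegral_indicator hJm _).symm
      _ = ∫⁻ x, φ (x + t • b) := lintegral_congr hpt
      _ = ∫⁻ z, φ z := lintegral_add_right_eq_self φ (t • b)
  rw [lintegral_congr hstep2]
  have hprodmeas2 : Measurable (Function.uncurry fun (t : ℝ) (z : EuclideanSpace ℝ (Fin n)) =>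
      J.indicator (fun _ => (1:ℝ≥0∞)) (z - t • b) * (F z * ((‖z - t • b‖₊ : ℝ≥0∞))⁻¹)) := by
    apply Measurable.mul
    · exact (measurable_const.indicator hJm).comp hshear'
    · exact (hFmeas.comp measurable_snd).mul
        ((hshear'.nnnorm.coe_nnreal_ennreal).inv)
  rw [lintegral_lintegral_swap hprodmeas2.aemeasurable]
  -- pointwise bound in z
  have hbound : ∀ z : EuclideanSpace ℝ (Fin n),
      (∫⁻ t : ℝ, J.indicator (fun _ => (1:ℝ≥0∞)) (z - t • b)
          * (F z * ((‖z - t • b‖₊ : ℝ≥0∞))⁻¹))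
        ≤ F z * ENNReal.ofReal C := by
    intro z
    set T : Set ℝ := {t : ℝ | |⟪b, z - t • b⟫| ≤ |⟪c, z - t • b⟫|} with hT
    have hTm : MeasurableSet T := by
      apply measurableSet_le
      · exact ((continuous_const.inner
          (continuous_const.sub (continuous_id.smul continuous_const))).abs).measurable
      · exact ((continuous_const.inner
          (continuous_const.sub (continuous_id.smul continuous_const))).abs).measurable
    have hpt : ∀ t : ℝ, J.indicator (fun _ => (1:ℝ≥0∞)) (z - t • b)
        * (F z * ((‖z - t • b‖₊ : ℝ≥0∞))⁻¹)
        = F z * T.indicator (fun t => ((‖z - t • b‖₊ : ℝ≥0∞))⁻¹) t := by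
      intro t
      by_cases ht : t ∈ T
      · have hmem : z - t • b ∈ J := ht
        rw [Set.indicator_of_mem hmem, Set.indicator_of_mem ht, one_mul]
      · have hmem : z - t • b ∉ J := ht
        rw [Set.indicator_of_notMem hmem, Set.indicator_of_notMem ht, zero_mul, mul_zero]
    rw [lintegral_congr hpt]
    have hmt : Measurable fun t : ℝ => T.indicator
        (fun t => ((‖z - t • b‖₊ : ℝ≥0∞))⁻¹) t := by
      apply Measurable.indicator _ hTm
      exact ((continuous_const.sub
        (continuous_id.smul continuous_const)).measurable.nnnorm.coe_nnreal_ennreal).inv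
    rw [lintegral_const_mul _ hmt]
    apply mul_le_mul_right _ (F z)
    rw [lintegral_indicator hTm]
    exact key_oneD b c hb hbc z
  calc ∫⁻ z, ∫⁻ t : ℝ, J.indicator (fun _ => (1:ℝ≥0∞)) (z - t • b)
        * (F z * ((‖z - t • b‖₊ : ℝ≥0∞))⁻¹)
      ≤ ∫⁻ z, F z * ENNReal.ofReal C := lintegral_mono hbound
    _ = (∫⁻ z, F z) * ENNReal.ofReal C := lintegral_mul_const _ hFmeas
    _ = ENNReal.ofReal C * ∫⁻ z, F z := mul_comm _ _
end
end

section
/- There exists a constant C > 0 such that for every u ∈ C_c^∞(ℝ³), ∫_{ℝ³} |u(x)| / |x| dx ≤ C ∫_{ℝ³} ( |∂_1 u(x)| + |∂_2 u(x)| ) dx. (In particular, the scalar Hardy inequality can hold for the non-elliptic operator (∂_1, ∂_2) on ℝ³.) -/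
open MeasureTheory ENNReal
open scoped NNReal RealInnerProductSpace

noncomputable section

open Function



def toE : (Fin 3 → ℝ) → EuclideanSpace ℝ (Fin 3) := WithLp.toLp 2

lemma measurePreserving_toE : MeasurePreserving toE volume volume :=
  (EuclideanSpace.volume_preserving_symm_measurableEquiv_toLp (Fin 3)).symm

lemma coord_le_norm (x : EuclideanSpace ℝ (Fin 3)) (i : Fin 3) : |x i| ≤ ‖x‖ := by
  have := EuclideanSpace.norm_eq x
  rw [this]
  rw [show |x i| = Real.sqrt (‖x i‖ ^ 2) by
    rw [Real.sqrt_sq_eq_abs]; simp [Real.norm_eq_abs]]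
  apply Real.sqrt_le_sqrt
  exact Finset.single_le_sum (f := fun j => ‖x j‖ ^ 2) (fun j _ => sq_nonneg _) (Finset.mem_univ i)

lemma toE_update_eq (y : Fin 3 → ℝ) (i : Fin 3) (t : ℝ) :
    toE (update y i t) = toE (update y i 0) + t • EuclideanSpace.single i (1:ℝ) := by
  ext j
  simp only [toE, id, PiLp.toLp_apply, PiLp.add_apply, PiLp.smul_apply, EuclideanSpace.single_apply,
    Function.update_apply, smul_eq_mul]
  by_cases h : j = i <;> simp [h]

def cmap (y : Fin 3 → ℝ) (i : Fin 3) : ℝ → EuclideanSpace ℝ (Fin 3) :=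
  fun t => toE (update y i t)

def dmap (u : EuclideanSpace ℝ (Fin 3) → ℝ) (y : Fin 3 → ℝ) (i : Fin 3) : ℝ → ℝ :=
  fun t => fderiv ℝ u (cmap y i t) (EuclideanSpace.single i (1:ℝ))

lemma cmap_eq (y : Fin 3 → ℝ) (i : Fin 3) :
    cmap y i = fun t => toE (update y i 0) + t • EuclideanSpace.single i (1:ℝ) :=
  funext fun t => toE_update_eq y i t

lemma ptwise (u : EuclideanSpace ℝ (Fin 3) → ℝ) (hsm : ContDiff ℝ (⊤ : ℕ∞) u)
    (hsp : HasCompactSupport u) (i : Fin 3) (y : Fin 3 → ℝ) :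
    (‖u (toE y)‖₊ : ℝ≥0∞)
      ≤ ∫⁻ t, (‖fderiv ℝ u (toE (update y i t)) (EuclideanSpace.single i (1:ℝ))‖₊ : ℝ≥0∞) := by
  have h1top : (1 : ℕ∞) ≤ (⊤ : ℕ∞) := le_top
  have hcder : ∀ t, HasDerivAt (cmap y i) (EuclideanSpace.single i (1:ℝ)) t := by
    intro t
    rw [cmap_eq]
    simpa using ((hasDerivAt_id t).smul_const (EuclideanSpace.single i (1:ℝ))).const_add
      (toE (update y i 0))
  have hccont : Continuous (cmap y i) := by
    rw [cmap_eq]; continuity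
  have hder : ∀ t, HasDerivAt (fun s => u (cmap y i s)) (dmap u y i t) t := fun t =>
    ((hsm.differentiable (by simp) (cmap y i t)).hasFDerivAt).comp_hasDerivAt
      t (hcder t)
  have hdcont : Continuous (dmap u y i) := by
    have h1 : Continuous (fderiv ℝ u) := hsm.continuous_fderiv (by simp)
    exact (h1.comp hccont).clm_apply continuous_const
  have hisoc : Isometry (cmap y i) := by
    apply Isometry.of_dist_eq
    intro a b
    simp only [cmap_eq, dist_eq_norm]
    rw [show toE (update y i 0) + a • EuclideanSpace.single i (1:ℝ)
        - (toE (update y i 0) + b • EuclideanSpace.single i (1:ℝ))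
        = (a - b) • EuclideanSpace.single i (1:ℝ) by module]
    rw [norm_smul, EuclideanSpace.norm_single]
    simp [Real.norm_eq_abs, Real.dist_eq]
  have hcs : HasCompactSupport (fun s => u (cmap y i s)) :=
    hsp.comp_isClosedEmbedding hisoc.isClosedEmbedding
  obtain ⟨r, hr⟩ := hcs.isCompact.isBounded.subset_closedBall 0
  set b : ℝ := -(|r| + |y i| + 1) with hb
  have hble : b ≤ y i := by
    have := abs_nonneg r
    have := neg_abs_le (y i)
    rw [hb]; linarith
  have hub : u (cmap y i b) = 0 := by
    by_contra h
    have hmem : b ∈ tsupport (fun s => u (cmap y i s)) := subset_tsupport _ h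
    have h2 := hr hmem
    simp only [Metric.mem_closedBall, Real.dist_eq, sub_zero] at h2
    have habs : |b| = |r| + |y i| + 1 := by
      rw [hb, abs_neg, abs_of_nonneg (by positivity)]
    have h1 : |r| + |y i| + 1 ≤ |r| := by
      calc |r| + |y i| + 1 = |b| := habs.symm
      _ ≤ r := h2
      _ ≤ |r| := le_abs_self r
    have := abs_nonneg (y i)
    linarith
  have hftc : ∫ t in b..(y i), dmap u y i t = u (cmap y i (y i)) - u (cmap y i b) :=
    intervalIntegral.integral_eq_sub_of_hasDerivAt (fun t _ => hder t)
      (hdcont.intervalIntegrable _ _)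
  have hcy : cmap y i (y i) = toE y := by
    show toE (update y i (y i)) = toE y
    rw [Function.update_eq_self]
  have hval : |u (toE y)| = |∫ t in b..(y i), dmap u y i t| := by
    rw [hftc, hub, hcy, sub_zero]
  have hbound : |∫ t in b..(y i), dmap u y i t|
      ≤ ∫ t in Set.Ioc b (y i), ‖dmap u y i t‖ := by
    rw [intervalIntegral.integral_of_le hble, ← Real.norm_eq_abs]
    exact norm_integral_le_integral_norm _
  have hint : IntegrableOn (dmap u y i) (Set.Ioc b (y i)) volume :=
    (hdcont.integrableOn_Icc).mono_set Set.Ioc_subset_Icc_self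
  calc (‖u (toE y)‖₊ : ℝ≥0∞) = ENNReal.ofReal |u (toE y)| := by
        rw [← enorm_eq_nnnorm, ← ofReal_norm, Real.norm_eq_abs]
    _ ≤ ENNReal.ofReal (∫ t in Set.Ioc b (y i), ‖dmap u y i t‖) := by
        rw [hval]; exact ENNReal.ofReal_le_ofReal hbound
    _ = ∫⁻ t in Set.Ioc b (y i), (‖dmap u y i t‖₊ : ℝ≥0∞) :=
        ofReal_integral_norm_eq_lintegral_enorm hint
    _ ≤ ∫⁻ t, (‖dmap u y i t‖₊ : ℝ≥0∞) := setLIntegral_le_lintegral _ _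

lemma hardy_piece (g : (Fin 3 → ℝ) → ℝ≥0∞) (hg : Measurable g) (i j : Fin 3)
    (hij : Fin.succAbove i 0 = j) :
    ∫⁻ y, Set.indicator {y : Fin 3 → ℝ | |y i| ≤ |y j|}
        (fun y => (∫⁻ t, g (update y i t)) / ENNReal.ofReal |y j|) y
      ≤ 2 * ∫⁻ y, g y := by
  set e := MeasurableEquiv.piFinSuccAbove (fun _ : Fin 3 => ℝ) i with he
  have mp : MeasurePreserving e volume volume :=
    volume_preserving_piFinSuccAbove (fun _ : Fin 3 => ℝ) i
  have hesymm : ∀ p : ℝ × (Fin 2 → ℝ), e.symm p = Fin.insertNth i p.1 p.2 := by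
    intro p; simp [he, MeasurableEquiv.piFinSuccAbove_symm_apply, Fin.insertNthEquiv]
  set T : (Fin 3 → ℝ) → ℝ≥0∞ := Set.indicator {y : Fin 3 → ℝ | |y i| ≤ |y j|}
      (fun y => (∫⁻ t, g (update y i t)) / ENNReal.ofReal |y j|) with hTdef
  have hF : Measurable fun y : Fin 3 → ℝ => ∫⁻ t, g (update y i t) :=
    (hg.comp measurable_update').lintegral_prod_right'
  have hSet : MeasurableSet {y : Fin 3 → ℝ | |y i| ≤ |y j|} :=
    (isClosed_le ((continuous_apply i).abs) ((continuous_apply j).abs)).measurableSet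
  have hT : Measurable T :=
    Measurable.indicator (hF.div ((measurable_pi_apply j).abs.ennreal_ofReal)) hSet
  set W : (Fin 2 → ℝ) → ℝ≥0∞ := fun z => ∫⁻ t, g (e.symm (t, z)) with hW
  have hWmeas : Measurable W := (hg.comp e.symm.measurable).lintegral_prod_left'
  have hkey : ∀ (z : Fin 2 → ℝ) (s : ℝ),
      T (e.symm (s, z))
        = Set.indicator {s : ℝ | |s| ≤ |z 0|} (fun _ => W z / ENNReal.ofReal |z 0|) s := by
    intro z s
    have hcoordi : (Fin.insertNth i s z : Fin 3 → ℝ) i = s := by simp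
    have hcoordj : (Fin.insertNth i s z : Fin 3 → ℝ) j = z 0 := by
      rw [← hij]; simp
    have hFval : (∫⁻ t, g (update (Fin.insertNth i s z) i t)) = W z := by
      refine lintegral_congr fun t => ?_
      rw [Fin.update_insertNth, hesymm (t, z)]
    rw [hTdef, hesymm (s, z)]
    by_cases hmem : |s| ≤ |z 0|
    · rw [Set.indicator_of_mem (by simp only [Set.mem_setOf_eq, hcoordi, hcoordj]; exact hmem),
        Set.indicator_of_mem (by simpa using hmem)]
      simp only [hFval, hcoordj]
    · rw [Set.indicator_of_notMem (by simp only [Set.mem_setOf_eq, hcoordi, hcoordj]; exact hmem),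
        Set.indicator_of_notMem (by simpa using hmem)]
  have habs : ∀ a : ℝ, {s : ℝ | |s| ≤ a} = Set.Icc (-a) a := by
    intro a; ext s; simp [abs_le]
  calc ∫⁻ y, T y = ∫⁻ p, T (e.symm p) := (mp.symm e |>.lintegral_comp hT).symm
    _ = ∫⁻ z, ∫⁻ s, T (e.symm (s, z)) :=
        lintegral_prod_symm _ ((hT.comp e.symm.measurable).aemeasurable)
    _ ≤ ∫⁻ z, 2 * W z := by
        refine lintegral_mono fun z => ?_
        calc ∫⁻ s, T (e.symm (s, z))
            = ∫⁻ s, Set.indicator {s : ℝ | |s| ≤ |z 0|}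
                (fun _ => W z / ENNReal.ofReal |z 0|) s := by
              exact lintegral_congr (hkey z)
          _ = (W z / ENNReal.ofReal |z 0|) * volume (Set.Icc (-|z 0|) (|z 0|)) := by
              rw [habs, lintegral_indicator measurableSet_Icc, setLIntegral_const]
          _ ≤ 2 * W z := by
              rw [Real.volume_Icc, show |z 0| - -|z 0| = 2 * |z 0| by ring,
                ENNReal.ofReal_mul (by norm_num : (0:ℝ) ≤ 2)]
              rw [show ENNReal.ofReal (2:ℝ) = 2 by simp]
              rw [mul_left_comm]
              refine mul_le_mul_right ?_ 2
              rw [mul_comm]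
              exact ENNReal.mul_div_le
    _ = 2 * ∫⁻ z, W z := lintegral_const_mul 2 hWmeas
    _ = 2 * ∫⁻ y, g y := by
        congr 1
        calc ∫⁻ z, W z = ∫⁻ z, ∫⁻ s, g (e.symm (s, z)) := rfl
          _ = ∫⁻ p, g (e.symm p) :=
              (lintegral_prod_symm _ ((hg.comp e.symm.measurable).aemeasurable)).symm
          _ = ∫⁻ y, g y := mp.symm e |>.lintegral_comp hg

/-- Hardy inequality for the non-elliptic operator `(∂₁, ∂₂)` on `ℝ³`.
There is `C > 0` such that for every `u ∈ C_c^∞(ℝ³)`,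
`∫ |u(x)|/|x| dx ≤ C ∫ (|∂₁u(x)| + |∂₂u(x)|) dx`. -/
theorem statement18 :
    ∃ C : ℝ, 0 < C ∧
      ∀ u : EuclideanSpace ℝ (Fin 3) → ℝ, IsTestFun u →
        ∫⁻ x, (‖u x‖₊ : ℝ≥0∞) / (‖x‖₊ : ℝ≥0∞)
          ≤ ENNReal.ofReal C *
            ∫⁻ x, ((‖fderiv ℝ u x (EuclideanSpace.single 0 (1 : ℝ))‖₊ : ℝ≥0∞)
              + (‖fderiv ℝ u x (EuclideanSpace.single 1 (1 : ℝ))‖₊ : ℝ≥0∞)) := by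
  refine ⟨2, two_pos, ?_⟩
  rintro u ⟨hsm, hsp⟩
  have h1top : (1 : ℕ∞) ≤ (⊤ : ℕ∞) := le_top
  set g : Fin 3 → (Fin 3 → ℝ) → ℝ≥0∞ := fun i y =>
    (‖fderiv ℝ u (toE y) (EuclideanSpace.single i (1:ℝ))‖₊ : ℝ≥0∞) with hgdef
  have hfcont : Continuous (fderiv ℝ u) := hsm.continuous_fderiv (by simp)
  have htoEcont : Continuous toE := PiLp.continuous_toLp 2 _
  have hgmeas : ∀ i, Measurable (g i) := fun i =>
    (((hfcont.comp htoEcont).clm_apply continuous_const).nnnorm.measurable).coe_nnreal_ennreal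
  have hmeasL : Measurable fun x : EuclideanSpace ℝ (Fin 3) =>
      (‖u x‖₊ : ℝ≥0∞) / (‖x‖₊ : ℝ≥0∞) :=
    (hsm.continuous.nnnorm.measurable.coe_nnreal_ennreal).div
      (continuous_nnnorm.measurable.coe_nnreal_ennreal)
  have hmeasR : Measurable fun x : EuclideanSpace ℝ (Fin 3) =>
      ((‖fderiv ℝ u x (EuclideanSpace.single 0 (1 : ℝ))‖₊ : ℝ≥0∞)
        + (‖fderiv ℝ u x (EuclideanSpace.single 1 (1 : ℝ))‖₊ : ℝ≥0∞)) :=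
    ((hfcont.clm_apply continuous_const).nnnorm.measurable.coe_nnreal_ennreal).add
      ((hfcont.clm_apply continuous_const).nnnorm.measurable.coe_nnreal_ennreal)
  set T0 : (Fin 3 → ℝ) → ℝ≥0∞ := Set.indicator {y : Fin 3 → ℝ | |y 0| ≤ |y 1|}
      (fun y => (∫⁻ t, g 0 (update y 0 t)) / ENNReal.ofReal |y 1|) with hT0def
  set T1 : (Fin 3 → ℝ) → ℝ≥0∞ := Set.indicator {y : Fin 3 → ℝ | |y 1| ≤ |y 0|}
      (fun y => (∫⁻ t, g 1 (update y 1 t)) / ENNReal.ofReal |y 0|) with hT1def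
  have hT0meas : Measurable T0 :=
    Measurable.indicator
      ((((hgmeas 0).comp measurable_update').lintegral_prod_right').div
        ((measurable_pi_apply 1).abs.ennreal_ofReal))
      ((isClosed_le ((continuous_apply 0).abs) ((continuous_apply 1).abs)).measurableSet)
  -- pointwise bound
  have hpt : ∀ y : Fin 3 → ℝ,
      (‖u (toE y)‖₊ : ℝ≥0∞) / (‖toE y‖₊ : ℝ≥0∞) ≤ T0 y + T1 y := by
    intro y
    rcases le_total |y 0| |y 1| with h | h
    · refine le_trans ?_ le_self_add
      rw [hT0def, Set.indicator_of_mem (by exact h)]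
      refine ENNReal.div_le_div (ptwise u hsm hsp 0 y) ?_
      rw [← enorm_eq_nnnorm, ← ofReal_norm]
      exact ENNReal.ofReal_le_ofReal (coord_le_norm (toE y) 1)
    · refine le_trans ?_ le_add_self
      rw [hT1def, Set.indicator_of_mem (by exact h)]
      refine ENNReal.div_le_div (ptwise u hsm hsp 1 y) ?_
      rw [← enorm_eq_nnnorm, ← ofReal_norm]
      exact ENNReal.ofReal_le_ofReal (coord_le_norm (toE y) 0)
  calc ∫⁻ x, (‖u x‖₊ : ℝ≥0∞) / (‖x‖₊ : ℝ≥0∞)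
      = ∫⁻ y, (‖u (toE y)‖₊ : ℝ≥0∞) / (‖toE y‖₊ : ℝ≥0∞) :=
        (measurePreserving_toE.lintegral_comp hmeasL).symm
    _ ≤ ∫⁻ y, (T0 y + T1 y) := lintegral_mono hpt
    _ = (∫⁻ y, T0 y) + ∫⁻ y, T1 y := lintegral_add_left hT0meas _
    _ ≤ 2 * (∫⁻ y, g 0 y) + 2 * ∫⁻ y, g 1 y := by
        refine add_le_add ?_ ?_
        · exact hardy_piece (g 0) (hgmeas 0) 0 1 (by decide)
        · exact hardy_piece (g 1) (hgmeas 1) 1 0 (by decide)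
    _ = 2 * ∫⁻ y, (g 0 y + g 1 y) := by
        rw [lintegral_add_left (hgmeas 0), mul_add]
    _ = ENNReal.ofReal 2 *
        ∫⁻ x, ((‖fderiv ℝ u x (EuclideanSpace.single 0 (1 : ℝ))‖₊ : ℝ≥0∞)
          + (‖fderiv ℝ u x (EuclideanSpace.single 1 (1 : ℝ))‖₊ : ℝ≥0∞)) := by
        rw [ENNReal.ofReal_ofNat]
        congr 1
        exact measurePreserving_toE.lintegral_comp hmeasR
end
end

section
/- Let n be a positive integer, V a finite-dimensional real inner product space and j ∈ ℕ. There exists a constant C > 0 such that for every u ∈ C_c^∞(ℝⁿ; V), |D^j u(0)| ≤ C ∫_{ℝⁿ} |D^{j+1} u(x)| / |x|^{n−1} dx. -/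
open MeasureTheory ENNReal
open scoped NNReal RealInnerProductSpace

noncomputable section

open Metric Set

/-- Pointwise estimate by a Riesz-type potential of the next derivative.
For every `n ≥ 1` and `j ∈ ℕ` there is `C > 0` such that for all `u ∈ C_c^∞(ℝⁿ; V)`,
`|D^j u(0)| ≤ C ∫ |D^{j+1}u(x)|/|x|^{n−1} dx`. -/
theorem statement19
    {V : Type*} [NormedAddCommGroup V] [InnerProductSpace ℝ V] [FiniteDimensional ℝ V]
    {n : ℕ} (hn : 0 < n) (j : ℕ) :
    ∃ C : ℝ, 0 < C ∧ ∀ u : EuclideanSpace ℝ (Fin n) → V, IsTestFun u →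
      (‖iteratedFDeriv ℝ j u 0‖₊ : ℝ≥0∞)
        ≤ ENNReal.ofReal C *
          ∫⁻ x, (‖iteratedFDeriv ℝ (j + 1) u x‖₊ : ℝ≥0∞)
            / (‖x‖₊ : ℝ≥0∞) ^ ((n : ℝ) - 1) := by
  
  set E := EuclideanSpace ℝ (Fin n)
  have hdim : Module.finrank ℝ E = n := finrank_euclideanSpace_fin
  haveI : Nontrivial E := Module.nontrivial_of_finrank_pos (R := ℝ) (by rw [hdim]; exact hn)
  set σ : Measure (sphere (0 : E) 1) := (volume : Measure E).toSphere with hσ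
  have hσu_ne : σ univ ≠ 0 := by
    rw [hσ, Measure.toSphere_apply_univ, hdim]
    exact mul_ne_zero (by exact_mod_cast hn.ne') (measure_ball_pos _ _ one_pos).ne'
  have hσu_fin : σ univ ≠ ∞ := (measure_lt_top σ univ).ne
  refine ⟨(σ univ).toReal⁻¹, inv_pos.2 (ENNReal.toReal_pos hσu_ne hσu_fin), ?_⟩
  intro u hu'
  obtain ⟨hu, hcu⟩ := hu'
  set F : E → ℝ≥0∞ := fun x => (‖iteratedFDeriv ℝ (j + 1) u x‖₊ : ℝ≥0∞) with hFdef
  set g : E → _ := iteratedFDeriv ℝ j u with hgdef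
  have hFcont : Continuous fun x => ‖iteratedFDeriv ℝ (j + 1) u x‖ :=
    (hu.continuous_iteratedFDeriv (by exact_mod_cast le_top)).norm
  have hFcont2 : Continuous F :=
    ENNReal.continuous_coe.comp ((hu.continuous_iteratedFDeriv (by exact_mod_cast le_top)).nnnorm)
  have hFmeas : Measurable F := hFcont2.measurable
  have hgd : Differentiable ℝ g :=
    hu.differentiable_iteratedFDeriv (by exact_mod_cast (by simp : (j : ℕ∞) < ⊤))
  have hgsm : ContDiff ℝ ((⊤ : ℕ∞) : WithTop ℕ∞) g := by
    exact hu.iteratedFDeriv_right (by exact_mod_cast (by simp : (⊤ : ℕ∞) + (j : ℕ∞) ≤ ⊤))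
  have hfdcont : Continuous (fderiv ℝ g) := hgsm.continuous_fderiv (by simp)
  -- Step A: for each direction ω, bound ‖g 0‖ by the ray integral of F
  have key : ∀ ω : sphere (0 : E) 1, (‖g 0‖₊ : ℝ≥0∞) ≤ ∫⁻ t in Ioi (0 : ℝ), F (t • (ω : E)) := by
    intro ω
    have hωn : ‖(ω : E)‖ = 1 := mem_sphere_zero_iff_norm.1 ω.2
    obtain ⟨R, hR⟩ := ((hcu.iteratedFDeriv (𝕜 := ℝ) j).isBounded).subset_closedBall 0
    set b : ℝ := max R 0 + 1 with hbdef
    have hb0 : (0 : ℝ) ≤ b := by positivity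
    have hgb : g (b • (ω : E)) = 0 := by
      apply image_eq_zero_of_notMem_tsupport
      intro h
      have hmem := hR h
      rw [mem_closedBall, dist_zero_right, norm_smul, hωn, mul_one, Real.norm_eq_abs,
        abs_of_nonneg hb0] at hmem
      have := le_max_left R 0
      simp only [hbdef] at hmem
      linarith
    set φ' : ℝ → _ := fun t => fderiv ℝ g (t • (ω : E)) (ω : E) with hφ'def
    have hder : ∀ t ∈ uIcc (0 : ℝ) b, HasDerivAt (fun t => g (t • (ω : E))) (φ' t) t := by
      intro t _
      have h1 : HasDerivAt (fun t : ℝ => t • (ω : E)) ((1 : ℝ) • (ω : E)) t :=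
        (hasDerivAt_id t).smul_const (ω : E)
      have h2 := (hgd (t • (ω : E))).hasFDerivAt.comp_hasDerivAt t h1
      rw [one_smul] at h2
      exact h2
    have hcont' : Continuous φ' :=
      (hfdcont.comp (continuous_id.smul continuous_const)).clm_apply continuous_const
    have heq := intervalIntegral.integral_eq_sub_of_hasDerivAt hder (hcont'.intervalIntegrable 0 b)
    rw [zero_smul] at heq
    have hb1 : ‖g 0‖ ≤ ∫ t in Ioc (0 : ℝ) b, ‖φ' t‖ := by
      have h2 := intervalIntegral.norm_integral_le_integral_norm (f := φ') (μ := volume)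
        (a := 0) (b := b) hb0
      rw [heq, hgb, zero_sub, norm_neg] at h2
      rwa [intervalIntegral.integral_of_le hb0] at h2
    have hptw : ∀ t : ℝ, ‖φ' t‖ ≤ ‖iteratedFDeriv ℝ (j + 1) u (t • (ω : E))‖ := by
      intro t
      calc ‖φ' t‖ ≤ ‖fderiv ℝ g (t • (ω : E))‖ * ‖(ω : E)‖ :=
            (fderiv ℝ g (t • (ω : E))).le_opNorm _
        _ = ‖iteratedFDeriv ℝ (j + 1) u (t • (ω : E))‖ := by
            rw [hωn, mul_one, hgdef, norm_fderiv_iteratedFDeriv]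
    have hIntBound : IntegrableOn (fun t : ℝ => ‖iteratedFDeriv ℝ (j + 1) u (t • (ω : E))‖)
        (Ioc (0 : ℝ) b) volume :=
      (hFcont.comp (continuous_id.smul continuous_const)).integrableOn_Ioc
    have hb2 : (∫ t in Ioc (0 : ℝ) b, ‖φ' t‖)
        ≤ ∫ t in Ioc (0 : ℝ) b, ‖iteratedFDeriv ℝ (j + 1) u (t • (ω : E))‖ :=
      setIntegral_mono_on (hcont'.norm.integrableOn_Ioc) hIntBound measurableSet_Ioc
        fun t _ => hptw t
    calc (‖g 0‖₊ : ℝ≥0∞) = ENNReal.ofReal ‖g 0‖ := (ofReal_norm _).symm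
      _ ≤ ENNReal.ofReal (∫ t in Ioc (0 : ℝ) b, ‖iteratedFDeriv ℝ (j + 1) u (t • (ω : E))‖) :=
          ENNReal.ofReal_le_ofReal (hb1.trans hb2)
      _ = ∫⁻ t in Ioc (0 : ℝ) b, ENNReal.ofReal ‖iteratedFDeriv ℝ (j + 1) u (t • (ω : E))‖ :=
          ofReal_integral_eq_lintegral_ofReal hIntBound
            (Filter.Eventually.of_forall fun t => norm_nonneg _)
      _ = ∫⁻ t in Ioc (0 : ℝ) b, F (t • (ω : E)) := by
          refine lintegral_congr fun t => ?_
          exact ofReal_norm _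
      _ ≤ ∫⁻ t in Ioi (0 : ℝ), F (t • (ω : E)) :=
          lintegral_mono_set Ioc_subset_Ioi_self
  -- Step C: polar coordinates
  set G : E → ℝ≥0∞ := fun x => F x / (‖x‖₊ : ℝ≥0∞) ^ ((n : ℝ) - 1) with hGdef
  have hGmeas : Measurable G := hFmeas.div (by fun_prop)
  have hcast : ((n : ℝ) - 1) = ((n - 1 : ℕ) : ℝ) := by
    rw [Nat.cast_sub hn, Nat.cast_one]
  have hpolar : (∫⁻ x, G x)
      = ∫⁻ ω : sphere (0 : E) 1, (∫⁻ t in Ioi (0 : ℝ), F (t • (ω : E))) ∂σ := by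
    have hmp := (volume : Measure E).measurePreserving_homeomorphUnitSphereProd
    rw [hdim] at hmp
    have hmeasH : Measurable fun p : sphere (0 : E) 1 × Ioi (0 : ℝ) =>
        G ((p.2 : ℝ) • (p.1 : E)) := by
      apply hGmeas.comp
      exact ((continuous_subtype_val.comp continuous_snd).smul
        (continuous_subtype_val.comp continuous_fst)).measurable
    have hid : ∀ x : ({0}ᶜ : Set E),
        (((homeomorphUnitSphereProd E) x).2 : ℝ) • (((homeomorphUnitSphereProd E) x).1 : E)
          = (x : E) := by
      intro x
      rw [← homeomorphUnitSphereProd_symm_apply_coe E ((homeomorphUnitSphereProd E) x),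
        Homeomorph.symm_apply_apply]
    calc (∫⁻ x, G x ∂(volume : Measure E)) = ∫⁻ x in ({0}ᶜ : Set E), G x := by
          rw [MeasureTheory.restrict_compl_singleton]
      _ = ∫⁻ x : ({0}ᶜ : Set E), G (x : E) ∂((volume : Measure E).comap Subtype.val) :=
          (lintegral_subtype_comap (measurableSet_singleton 0).compl _).symm
      _ = ∫⁻ p : sphere (0 : E) 1 × Ioi (0 : ℝ), G ((p.2 : ℝ) • (p.1 : E))
            ∂(σ.prod (Measure.volumeIoiPow (n - 1))) := by
          rw [← hmp.lintegral_comp hmeasH]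
          exact lintegral_congr fun x => by rw [hid x]
      _ = ∫⁻ ω : sphere (0 : E) 1, ∫⁻ r : Ioi (0 : ℝ), G ((r : ℝ) • (ω : E))
            ∂(Measure.volumeIoiPow (n - 1)) ∂σ :=
          lintegral_prod _ hmeasH.aemeasurable
      _ = _ := by
          refine lintegral_congr fun ω => ?_
          have hωn : ‖(ω : E)‖ = 1 := mem_sphere_zero_iff_norm.1 ω.2
          rw [Measure.volumeIoiPow,
            lintegral_withDensity_eq_lintegral_mul _
              (f := fun r : Ioi (0 : ℝ) => ENNReal.ofReal ((r : ℝ) ^ (n - 1)))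
              (by fun_prop)
              (g := fun r : Ioi (0 : ℝ) => G ((r : ℝ) • (ω : E)))
              (hGmeas.comp ((continuous_subtype_val.smul continuous_const).measurable))]
          have : ∫⁻ r : Ioi (0 : ℝ),
              ((fun r : Ioi (0 : ℝ) => ENNReal.ofReal ((r : ℝ) ^ (n - 1)))
                * fun r : Ioi (0 : ℝ) => G ((r : ℝ) • (ω : E))) r
              ∂(Measure.comap Subtype.val volume)
              = ∫⁻ t in Ioi (0 : ℝ), ENNReal.ofReal (t ^ (n - 1)) * G (t • (ω : E)) :=
            lintegral_subtype_comap measurableSet_Ioi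
              (fun t : ℝ => ENNReal.ofReal (t ^ (n - 1)) * G (t • (ω : E)))
          rw [this]
          refine setLIntegral_congr_fun measurableSet_Ioi (
            fun t ht => ?_)
          have ht : (0 : ℝ) < t := ht
          have hnorm : (‖t • (ω : E)‖₊ : ℝ≥0∞) = ENNReal.ofReal t := by
            rw [← enorm_eq_nnnorm, ← ofReal_norm, norm_smul, hωn, mul_one, Real.norm_eq_abs,
              abs_of_pos ht]
          have hpow : (‖t • (ω : E)‖₊ : ℝ≥0∞) ^ ((n : ℝ) - 1)
              = ENNReal.ofReal (t ^ (n - 1)) := by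
            rw [hnorm, ENNReal.ofReal_rpow_of_pos ht, hcast, Real.rpow_natCast]
          show ENNReal.ofReal (t ^ (n - 1))
              * (F (t • (ω : E)) / (‖t • (ω : E)‖₊ : ℝ≥0∞) ^ ((n : ℝ) - 1)) = F (t • (ω : E))
          rw [hpow]
          exact ENNReal.mul_div_cancel
            ((ENNReal.ofReal_pos.2 (pow_pos ht _)).ne') ENNReal.ofReal_ne_top
  have main : σ univ * (‖g 0‖₊ : ℝ≥0∞) ≤ ∫⁻ x, G x := by
    rw [hpolar]
    calc σ univ * (‖g 0‖₊ : ℝ≥0∞)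
        = ∫⁻ _ : sphere (0 : E) 1, (‖g 0‖₊ : ℝ≥0∞) ∂σ := by rw [lintegral_const, mul_comm]
      _ ≤ _ := lintegral_mono fun ω => key ω
  calc (‖g 0‖₊ : ℝ≥0∞) = (σ univ)⁻¹ * (σ univ * (‖g 0‖₊ : ℝ≥0∞)) := by
        rw [← mul_assoc, ENNReal.inv_mul_cancel hσu_ne hσu_fin, one_mul]
    _ ≤ (σ univ)⁻¹ * ∫⁻ x, G x := mul_le_mul_right main _
    _ = ENNReal.ofReal (σ univ).toReal⁻¹ * ∫⁻ x, G x := by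
        rw [ENNReal.ofReal_inv_of_pos (ENNReal.toReal_pos hσu_ne hσu_fin),
          ENNReal.ofReal_toReal hσu_fin]
end
end
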